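/- If two vertex orderings S and S' of a graph induce the same relative order on every pair of adjacent vertices (i.e., for all edges uv, u precedes v in S if and only if u precedes v in S'), then the first-fit colorings along S and S' are identical. -/

import Mathlib

open SimpleGraph

/-- First-fit coloring along a vertex sequence: each vertex in turn receives the
smallest positive integer not used on its already-colored neighbors. Uncolored
vertices have color `0`. -/
noncomputable def firstFit {V : Type*} [DecidableEq V] (G : SimpleGraph V) (l : List V) :
    V → ℕ :=
  l.foldl (fun c v => Function.update c v
    (sInf {k | 0 < k ∧ ∀ u, G.Adj v u → c u ≠ k})) (fun _ => 0)

/-- `l` is an ordering of all vertices. -/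
def IsOrdering {V : Type*} (l : List V) : Prop := l.Nodup ∧ ∀ v : V, v ∈ l

/-- `l` is a connected ordering: every vertex after the first has a neighbor earlier. -/
def IsConnectedOrdering {V : Type*} (G : SimpleGraph V) (l : List V) : Prop :=
  IsOrdering l ∧ ∀ i (hi : i < l.length), 0 < i → ∃ u ∈ l.take i, G.Adj u (l.get ⟨i, hi⟩)

/-- Number of colors used by first-fit along `l`. -/
noncomputable def numColors {V : Type*} [Fintype V] [DecidableEq V] (G : SimpleGraph V)
    (l : List V) : ℕ :=
  Finset.univ.sup (firstFit G l)

/-- The Grundy number: maximum number of first-fit colors over all vertex orderings. -/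
noncomputable def grundy {V : Type*} [Fintype V] [DecidableEq V] (G : SimpleGraph V) : ℕ :=
  sSup {k | ∃ l : List V, IsOrdering l ∧ k = numColors G l}

/-- The connected Grundy number: maximum number of first-fit colors over connected orderings. -/
noncomputable def connGrundy {V : Type*} [Fintype V] [DecidableEq V] (G : SimpleGraph V) : ℕ :=
  sSup {k | ∃ l : List V, IsConnectedOrdering G l ∧ k = numColors G l}

section Aux
variable {V : Type*} [DecidableEq V] (G : SimpleGraph V)

private noncomputable def ffStep (c : V → ℕ) (v : V) : V → ℕ :=
  Function.update c v (sInf {k | 0 < k ∧ ∀ u, G.Adj v u → c u ≠ k})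

private lemma firstFit_eq (l : List V) :
    firstFit G l = l.foldl (ffStep G) (fun _ => 0) := rfl

private lemma foldl_notmem (l : List V) (c : V → ℕ) (v : V) (hv : v ∉ l) :
    l.foldl (ffStep G) c v = c v := by
  induction l generalizing c with
  | nil => rfl
  | cons a t ih =>
    simp only [List.foldl_cons]
    rw [ih _ (fun h => hv (List.mem_cons_of_mem a h))]
    have : v ≠ a := fun h => hv (h ▸ List.mem_cons_self)
    simp [ffStep, Function.update_of_ne this]

private lemma ff_notmem (l : List V) (v : V) (hv : v ∉ l) : firstFit G l v = 0 := by
  rw [firstFit_eq]; exact foldl_notmem G l _ v hv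

private lemma mem_take_iff (l : List V) (hl : l.Nodup) (n : ℕ) (u : V) :
    u ∈ l.take n ↔ u ∈ l ∧ l.idxOf u < n := by
  constructor
  · intro hu
    obtain ⟨i, hi, he⟩ := List.getElem_of_mem hu
    have hlen : i < l.length := lt_of_lt_of_le hi (by simp [List.length_take])
    have hn : i < n := lt_of_lt_of_le hi (by simp [List.length_take])
    have he' : l[i] = u := by rw [← he, List.getElem_take]
    have hmem : u ∈ l := he' ▸ List.getElem_mem hlen
    have hidx : l.idxOf u < l.length := List.idxOf_lt_length_iff.mpr hmem
    have hg : l[l.idxOf u]'hidx = u := List.idxOf_get _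
    have : i = l.idxOf u := (List.Nodup.getElem_inj_iff hl).mp (by rw [he', hg])
    exact ⟨hmem, this ▸ hn⟩
  · rintro ⟨hmem, hidx⟩
    have hlen : l.idxOf u < l.length := List.idxOf_lt_length_iff.mpr hmem
    have h1 : l.idxOf u < (l.take n).length := by simp [List.length_take]; omega
    have : (l.take n)[l.idxOf u]'h1 = u := by
      rw [List.getElem_take]; exact List.idxOf_get _
    exact this ▸ List.getElem_mem h1

private lemma ff_spec (l : List V) (hl : l.Nodup) (v : V) (hv : v ∈ l) :
    firstFit G l v = sInf {k | 0 < k ∧ ∀ u, G.Adj v u →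
      l.idxOf u < l.idxOf v → firstFit G l u ≠ k} := by
  set i := l.idxOf v with hi
  have hil : i < l.length := List.idxOf_lt_length_iff.mpr hv
  have hgi : l[i]'hil = v := List.idxOf_get _
  have hdecomp : l = l.take i ++ v :: l.drop (i + 1) := by
    conv_lhs => rw [← List.take_append_drop i l]
    rw [List.drop_eq_getElem_cons hil, hgi]
  have hnd : (l.take i ++ v :: l.drop (i + 1)).Nodup := hdecomp ▸ hl
  have hdisj := (List.nodup_append.mp hnd).2.2
  have hv1 : v ∉ l.take i := by
    intro hmem
    exact absurd ((mem_take_iff l hl i v).mp hmem).2 (lt_irrefl i)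
  have hv2 : v ∉ v :: l.drop (i + 1) → v ∉ l.drop (i+1) := fun h h' => h (List.mem_cons_of_mem _ h')
  have hv2' : v ∉ l.drop (i + 1) :=
    (List.nodup_cons.mp (List.Nodup.of_append_right hnd)).1
  have heq_take : ∀ u, u ∈ l.take i → firstFit G l u = firstFit G (l.take i) u := by
    intro u hu1
    have hu2 : u ∉ v :: l.drop (i + 1) := fun hmem => hdisj u hu1 u hmem rfl
    rw [firstFit_eq]
    conv_lhs => rw [hdecomp]
    rw [List.foldl_append, foldl_notmem G _ _ u hu2]
    rfl
  have key : firstFit G l v =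
      sInf {k | 0 < k ∧ ∀ u, G.Adj v u → firstFit G (l.take i) u ≠ k} := by
    rw [firstFit_eq]
    conv_lhs => rw [hdecomp]
    rw [List.foldl_append, List.foldl_cons, foldl_notmem G _ _ v hv2']
    show Function.update _ v _ v = _
    rw [Function.update_self]
    rfl
  rw [key]
  congr 1
  ext k
  simp only [Set.mem_setOf_eq, and_congr_right_iff]
  intro hk
  constructor
  · intro hall u hadj hlt
    have hu1 : u ∈ l.take i := (mem_take_iff l hl i u).mpr
      ⟨List.idxOf_lt_length_iff.mp (lt_of_lt_of_le hlt (le_of_lt hil)), hlt⟩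
    rw [heq_take u hu1]; exact hall u hadj
  · intro hall u hadj
    by_cases hu1 : u ∈ l.take i
    · obtain ⟨humem, hlt⟩ := (mem_take_iff l hl i u).mp hu1
      rw [← heq_take u hu1]
      exact hall u hadj hlt
    · rw [ff_notmem G _ u hu1]; omega

end Aux
theorem stmt10 {V : Type*} [DecidableEq V] (G : SimpleGraph V) (S S' : List V)
    (h1 : IsOrdering S) (h2 : IsOrdering S')
    (h : ∀ u w : V, G.Adj u w → (S.idxOf u < S.idxOf w ↔ S'.idxOf u < S'.idxOf w)) :
    firstFit G S = firstFit G S' := by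
  obtain ⟨hnd1, hmem1⟩ := h1
  obtain ⟨hnd2, hmem2⟩ := h2
  suffices H : ∀ n v, S.idxOf v = n → firstFit G S v = firstFit G S' v by
    funext v; exact H _ v rfl
  intro n
  induction n using Nat.strong_induction_on with
  | _ n ih =>
    intro v hn
    rw [ff_spec G S hnd1 v (hmem1 v), ff_spec G S' hnd2 v (hmem2 v)]
    congr 1
    ext k
    simp only [Set.mem_setOf_eq, and_congr_right_iff]
    intro hk
    constructor
    · intro hall u hadj hlt
      have hlt' : S.idxOf u < S.idxOf v := (h u v hadj.symm).mpr hlt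
      rw [← ih (S.idxOf u) (hn ▸ hlt') u rfl]
      exact hall u hadj hlt'
    · intro hall u hadj hlt
      have hlt' : S'.idxOf u < S'.idxOf v := (h u v hadj.symm).mp hlt
      rw [ih (S.idxOf u) (hn ▸ hlt) u rfl]
      exact hall u hadj hlt'
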